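/- arXiv:2303.11669 — 3 statements merged into one kernel-verified Lean document; each statement's English description precedes it below -/
import Mathlib

section
/- Let $q(\mathbf{y}) = \int \prod_{m=1}^M \mathcal{N}(y_m; x, \sigma^2 I_d)\, p(x)\, dx$ be the Gaussian M-density with equal noise levels. Then there exists a function $\varphi: \mathbb{R}^d \to \mathbb{R}$ and a constant $C$ such that $-\log q(\mathbf{y}) = \frac{M}{2\sigma^2}\left(\overline{\|y\|^2} - \|\overline{y}\|^2\right) + \varphi(\overline{y}) + C$; i.e., the energy depends on $\mathbf{y}$ only through $\overline{y}$ and the within-sample variance term. -/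
open MeasureTheory Finset

/-- Isotropic Gaussian density `N(z; 0, σ² I_d)` on `ℝ^d`. -/
noncomputable def gaussPdf (d : ℕ) (σ : ℝ) (z : EuclideanSpace ℝ (Fin d)) : ℝ :=
  (2 * Real.pi * σ ^ 2) ^ (-(d : ℝ) / 2) * Real.exp (-‖z‖ ^ 2 / (2 * σ ^ 2))

/-- Gaussian M-density: `q(y₁,…,y_M) = ∫ ∏ m N(y m; x, σ² I_d) p(x) dx`. -/
noncomputable def mDensity (d M : ℕ) (σ : ℝ) (p : EuclideanSpace ℝ (Fin d) → ℝ)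
    (y : Fin M → EuclideanSpace ℝ (Fin d)) : ℝ :=
  ∫ x, (∏ m, gaussPdf d σ (y m - x)) * p x

/-- The energy of the Gaussian M-density with equal noise levels has the
universal form `-log q(y) = (M/2σ²)(mean‖y‖² - ‖ȳ‖²) + φ(ȳ) + C` for some
`φ : ℝ^d → ℝ` and constant `C`: the energy depends on `y` only through `ȳ` and the
within-sample variance. -/
theorem mDensity_energy_universal_form
    (d M : ℕ) (hM : 1 ≤ M) (σ : ℝ) (hσ : 0 < σ)
    (p : EuclideanSpace ℝ (Fin d) → ℝ) (hp_meas : Measurable p)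
    (hp_nonneg : ∀ x, 0 ≤ p x) (hp_int : ∫ x, p x = 1)
    (hp_integrable : Integrable p) :
    ∃ (φ : EuclideanSpace ℝ (Fin d) → ℝ) (C : ℝ),
      ∀ y : Fin M → EuclideanSpace ℝ (Fin d),
        -Real.log (mDensity d M σ p y) =
          (M : ℝ) / (2 * σ ^ 2) *
            ((M : ℝ)⁻¹ * ∑ m, ‖y m‖ ^ 2 - ‖(M : ℝ)⁻¹ • ∑ m, y m‖ ^ 2)
          + φ ((M : ℝ)⁻¹ • ∑ m, y m) + C := by
  have hc0 : (0:ℝ) < 2 * σ ^ 2 := by positivity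
  have hc0' : (2 * σ ^ 2 : ℝ) ≠ 0 := ne_of_gt hc0
  have hM0 : (M:ℝ) ≠ 0 := Nat.cast_ne_zero.mpr (by omega)
  set A : ℝ := (2 * Real.pi * σ ^ 2) ^ (-(d : ℝ) / 2) with hA
  have hA0 : 0 < A := Real.rpow_pos_of_pos (by positivity) _
  set I : EuclideanSpace ℝ (Fin d) → ℝ :=
    fun z => ∫ x, Real.exp (-((M:ℝ) * ‖z - x‖ ^ 2) / (2 * σ ^ 2)) * p x with hI
  have hIpos : ∀ z, 0 < I z := by
    intro z
    have hcont : Continuous fun x : EuclideanSpace ℝ (Fin d) =>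
        Real.exp (-((M:ℝ) * ‖z - x‖ ^ 2) / (2 * σ ^ 2)) := by continuity
    have hle : ∀ x, Real.exp (-((M:ℝ) * ‖z - x‖ ^ 2) / (2 * σ ^ 2)) ≤ 1 := by
      intro x
      have h1 : (0:ℝ) ≤ (M:ℝ) * ‖z - x‖ ^ 2 := by positivity
      exact Real.exp_le_one_iff.mpr
        (div_nonpos_of_nonpos_of_nonneg (by linarith) (by positivity))
    have hint : Integrable (fun x => Real.exp (-((M:ℝ) * ‖z - x‖ ^ 2) / (2 * σ ^ 2)) * p x) := by
      refine hp_integrable.mono' (hcont.measurable.mul hp_meas).aestronglyMeasurable ?_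
      filter_upwards with x
      rw [Real.norm_eq_abs, abs_of_nonneg (mul_nonneg (Real.exp_pos _).le (hp_nonneg x))]
      exact mul_le_of_le_one_left (hp_nonneg x) (hle x)
    rw [hI]
    rw [integral_pos_iff_support_of_nonneg
      (fun x => mul_nonneg (Real.exp_pos _).le (hp_nonneg x)) hint]
    have hsupp : (Function.support fun x =>
        Real.exp (-((M:ℝ) * ‖z - x‖ ^ 2) / (2 * σ ^ 2)) * p x) = Function.support p := by
      ext x
      simp [Function.mem_support, mul_eq_zero, Real.exp_ne_zero]
    rw [hsupp]
    by_contra h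
    push_neg at h
    have h0 : volume (Function.support p) = 0 := le_antisymm h bot_le
    have : p =ᵐ[volume] 0 := by
      refine (ae_iff).mpr ?_
      simpa [Function.support] using h0
    rw [integral_congr_ae this] at hp_int
    simp at hp_int
  refine ⟨fun z => -Real.log (I z), -(M:ℝ) * Real.log A, ?_⟩
  intro y
  set yb : EuclideanSpace ℝ (Fin d) := (M:ℝ)⁻¹ • ∑ m, y m with hyb
  set S : ℝ := ∑ m, ‖y m‖ ^ 2 with hS
  have key : ∀ x : EuclideanSpace ℝ (Fin d),
      ∑ m, ‖y m - x‖ ^ 2 = (S - (M:ℝ) * ‖yb‖ ^ 2) + (M:ℝ) * ‖yb - x‖ ^ 2 := by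
    intro x
    have expand : ∀ a b : EuclideanSpace ℝ (Fin d),
        ‖a - b‖ ^ 2 = ‖a‖ ^ 2 - 2 * (inner ℝ a b : ℝ) + ‖b‖ ^ 2 := fun a b =>
      norm_sub_sq_real a b
    have h1 : (inner ℝ yb x : ℝ) = (M:ℝ)⁻¹ * ∑ m, (inner ℝ (y m) x : ℝ) := by
      rw [hyb, real_inner_smul_left, sum_inner]
    have h2 : ‖yb‖ ^ 2 = ((M:ℝ)⁻¹) ^ 2 * ‖∑ m, y m‖ ^ 2 := by
      rw [hyb, norm_smul, mul_pow, Real.norm_eq_abs, sq_abs]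
    have h3 : ‖∑ m, y m‖ ^ 2 = (inner ℝ (∑ m, y m) (∑ m, y m) : ℝ) :=
      (real_inner_self_eq_norm_sq _).symm
    have h4 : (inner ℝ (∑ m, y m) x : ℝ) = ∑ m, (inner ℝ (y m) x : ℝ) := sum_inner _ _ _
    simp only [expand, sum_add_distrib, sum_sub_distrib, sum_const, card_univ,
      Fintype.card_fin, nsmul_eq_mul, ← mul_sum, hS]
    rw [h1, h2, ← h4]
    field_simp
    ring
  have hprod : ∀ x : EuclideanSpace ℝ (Fin d),
      (∏ m, gaussPdf d σ (y m - x)) * p x =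
        (A ^ M * Real.exp (-(S - (M:ℝ) * ‖yb‖ ^ 2) / (2 * σ ^ 2))) *
          (Real.exp (-((M:ℝ) * ‖yb - x‖ ^ 2) / (2 * σ ^ 2)) * p x) := by
    intro x
    simp only [gaussPdf, ← hA]
    rw [prod_mul_distrib, prod_const, card_univ, Fintype.card_fin, ← Real.exp_sum]
    have : ∑ m, -‖y m - x‖ ^ 2 / (2 * σ ^ 2) =
        -(S - (M:ℝ) * ‖yb‖ ^ 2) / (2 * σ ^ 2) + -((M:ℝ) * ‖yb - x‖ ^ 2) / (2 * σ ^ 2) := by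
      rw [← sum_div, show (∑ m, -‖y m - x‖ ^ 2) = -(∑ m, ‖y m - x‖ ^ 2) from by
        simp, key x]
      ring
    rw [this, Real.exp_add]
    ring
  have hq : mDensity d M σ p y =
      (A ^ M * Real.exp (-(S - (M:ℝ) * ‖yb‖ ^ 2) / (2 * σ ^ 2))) * I yb := by
    rw [mDensity, hI]
    rw [show (fun x => (∏ m, gaussPdf d σ (y m - x)) * p x) = fun x =>
      (A ^ M * Real.exp (-(S - (M:ℝ) * ‖yb‖ ^ 2) / (2 * σ ^ 2))) *
        (Real.exp (-((M:ℝ) * ‖yb - x‖ ^ 2) / (2 * σ ^ 2)) * p x) from funext hprod]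
    exact integral_const_mul _ _
  rw [hq, Real.log_mul (by positivity) (hIpos yb).ne',
    Real.log_mul (by positivity) (Real.exp_ne_zero _), Real.log_exp, Real.log_pow]
  field_simp
  ring
end

section
/- (Multimeasurement Bayes estimator) Let $X \sim p$ on $\mathbb{R}^d$ and $Y_m = X + \mathcal{N}(0, \sigma^2 I_d)$ i.i.d. for $m = 1,\dots,M$, with joint smoothed density $q(\mathbf{y}) = \int \prod_m \mathcal{N}(y_m; x, \sigma^2 I_d) p(x) dx$. Then for every index $m$, $\mathbb{E}[X \mid \mathbf{Y} = \mathbf{y}] = y_m + \sigma^2 \nabla_{y_m} \log q(\mathbf{y})$; in particular the right-hand side is independent of the choice of $m$. -/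
open MeasureTheory Finset

lemma gaussPdf_pos (d : ℕ) {σ : ℝ} (hσ : 0 < σ) (z : EuclideanSpace ℝ (Fin d)) :
    0 < gaussPdf d σ z := by
  unfold gaussPdf
  positivity

lemma gaussPdf_le (d : ℕ) {σ : ℝ} (hσ : 0 < σ) (z : EuclideanSpace ℝ (Fin d)) :
    gaussPdf d σ z ≤ (2 * Real.pi * σ ^ 2) ^ (-(d : ℝ) / 2) := by
  unfold gaussPdf
  have h1 : Real.exp (-‖z‖ ^ 2 / (2 * σ ^ 2)) ≤ 1 := by
    apply Real.exp_le_one_iff.2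
    have : 0 ≤ ‖z‖ ^ 2 / (2 * σ ^ 2) := by positivity
    rw [neg_div]; linarith
  have h2 : (0:ℝ) < (2 * Real.pi * σ ^ 2) ^ (-(d : ℝ) / 2) := by positivity
  nlinarith

lemma gaussPdf_continuous (d : ℕ) (σ : ℝ) : Continuous (gaussPdf d σ) := by
  unfold gaussPdf
  fun_prop

lemma gauss_hasGradientAt (d : ℕ) {σ : ℝ} (hσ : 0 < σ) (x z : EuclideanSpace ℝ (Fin d)) :
    HasGradientAt (fun w => gaussPdf d σ (w - x))
      ((-(σ ^ 2)⁻¹ * gaussPdf d σ (z - x)) • (z - x)) z := by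
  have hsq : HasGradientAt (fun w : EuclideanSpace ℝ (Fin d) => ‖w - x‖ ^ 2)
      ((2:ℝ) • (z - x)) z := by
    have hid : HasFDerivAt (fun w : EuclideanSpace ℝ (Fin d) => w - x)
        (ContinuousLinearMap.id ℝ _) z := (hasFDerivAt_id z).sub_const x
    have h := hid.inner ℝ hid
    rw [hasGradientAt_iff_hasFDerivAt]
    have heq : (fun w : EuclideanSpace ℝ (Fin d) => ‖w - x‖ ^ 2)
        = fun w => (inner ℝ (w - x) (w - x) : ℝ) := by
      funext w; rw [real_inner_self_eq_norm_sq]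
    rw [heq]
    refine h.congr_fderiv ?_
    ext v
    simp [fderivInnerCLM_apply, InnerProductSpace.toDual_apply_apply, real_inner_smul_left,
      real_inner_comm (z - x) v]
    simp only [inner_sub_left]
    ring
  set A : ℝ := (2 * Real.pi * σ ^ 2) ^ (-(d : ℝ) / 2) with hA
  set cst : ℝ := (2 * σ ^ 2)⁻¹ with hcst
  have hfun : (fun w : EuclideanSpace ℝ (Fin d) => gaussPdf d σ (w - x))
      = fun w => A * Real.exp (-cst * ‖w - x‖ ^ 2) := by
    funext w
    unfold gaussPdf
    rw [show -‖w - x‖ ^ 2 / (2 * σ ^ 2) = -cst * ‖w - x‖ ^ 2 by rw [hcst]; ring]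
  have hinner : HasFDerivAt (fun w : EuclideanSpace ℝ (Fin d) => -cst * ‖w - x‖ ^ 2)
      ((-cst) • (InnerProductSpace.toDual ℝ _ ((2:ℝ) • (z - x)))) z :=
    (hsq.hasFDerivAt).const_mul (-cst)
  have hexp := (Real.hasDerivAt_exp (-cst * ‖z - x‖ ^ 2)).comp_hasFDerivAt z hinner
  have hmul := hexp.const_mul A
  rw [hasGradientAt_iff_hasFDerivAt, hfun]
  refine hmul.congr_fderiv ?_
  ext v
  simp only [InnerProductSpace.toDual_apply_apply, ContinuousLinearMap.smul_apply,
    real_inner_smul_left, smul_eq_mul]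
  have hexpand : gaussPdf d σ (z - x) = A * Real.exp (-cst * ‖z - x‖ ^ 2) := by
    have := congrFun hfun z
    simpa using this
  rw [hexpand]
  have hc : -(σ ^ 2)⁻¹ = -cst * 2 := by
    rw [hcst]
    field_simp
  rw [hc]
  ring

lemma mul_exp_bound {σ u : ℝ} (hσ : 0 < σ) (hu : 0 ≤ u) :
    u * Real.exp (-u ^ 2 / (2 * σ ^ 2)) ≤ σ := by
  set v := u / σ with hv
  have hv0 : 0 ≤ v := by positivity
  have h1 : v ≤ Real.exp (v ^ 2 / 2) := by
    have := Real.add_one_le_exp (v ^ 2 / 2)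
    nlinarith [sq_nonneg (v - 1)]
  have h2 : v * Real.exp (-(v ^ 2 / 2)) ≤ 1 := by
    have := mul_le_mul_of_nonneg_right h1 (Real.exp_pos (-(v ^ 2 / 2))).le
    rwa [← Real.exp_add, add_neg_cancel, Real.exp_zero] at this
  have hu' : u = σ * v := by rw [hv]; field_simp
  have harg : -u ^ 2 / (2 * σ ^ 2) = -(v ^ 2 / 2) := by
    rw [hu']; field_simp
  rw [harg, hu']
  calc σ * v * Real.exp (-(v ^ 2 / 2)) = σ * (v * Real.exp (-(v ^ 2 / 2))) := by ring
    _ ≤ σ * 1 := mul_le_mul_of_nonneg_left h2 hσ.le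
    _ = σ := mul_one σ

lemma gaussGrad_norm_le (d : ℕ) {σ : ℝ} (hσ : 0 < σ) (x z : EuclideanSpace ℝ (Fin d)) :
    ‖(-(σ ^ 2)⁻¹ * gaussPdf d σ (z - x)) • (z - x)‖
      ≤ (2 * Real.pi * σ ^ 2) ^ (-(d : ℝ) / 2) / σ := by
  have key := mul_exp_bound hσ (norm_nonneg (z - x))
  have hA0 : (0:ℝ) < (2 * Real.pi * σ ^ 2) ^ (-(d : ℝ) / 2) := by positivity
  rw [norm_smul, Real.norm_eq_abs]
  unfold gaussPdf
  rw [abs_mul, abs_neg, abs_inv, abs_of_pos (by positivity : (0:ℝ) < σ ^ 2),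
    abs_of_pos (by positivity)]
  calc (σ ^ 2)⁻¹ * ((2 * Real.pi * σ ^ 2) ^ (-(d : ℝ) / 2)
          * Real.exp (-‖z - x‖ ^ 2 / (2 * σ ^ 2))) * ‖z - x‖
      = (2 * Real.pi * σ ^ 2) ^ (-(d : ℝ) / 2) * (σ ^ 2)⁻¹
          * (‖z - x‖ * Real.exp (-‖z - x‖ ^ 2 / (2 * σ ^ 2))) := by ring
    _ ≤ (2 * Real.pi * σ ^ 2) ^ (-(d : ℝ) / 2) * (σ ^ 2)⁻¹ * σ :=
        mul_le_mul_of_nonneg_left key (by positivity)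
    _ = (2 * Real.pi * σ ^ 2) ^ (-(d : ℝ) / 2) / σ := by
        field_simp

/-- Multimeasurement Bayes estimator: with
`q(y) = ∫ ∏ m N(y m; x, σ² I_d) p(x) dx` the Gaussian M-density of `p`, the posterior
mean `E[X | Y = y] = (∫ x ∏ m N(y m;x,σ²I) p(x) dx) / q(y)` satisfies, for every
measurement index `m`, `E[X | Y = y] = y m + σ² ∇_{y_m} log q(y)`; in particular the
right-hand side does not depend on `m`. -/
theorem multimeasurement_bayes_estimator
    (d M : ℕ) (hM : 1 ≤ M) (σ : ℝ) (hσ : 0 < σ)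
    (p : EuclideanSpace ℝ (Fin d) → ℝ) (hp_meas : Measurable p)
    (hp_nonneg : ∀ x, 0 ≤ p x) (hp_int : ∫ x, p x = 1)
    (hp_moment : Integrable (fun x => ‖x‖ * p x))
    (q : (Fin M → EuclideanSpace ℝ (Fin d)) → ℝ)
    (hq : ∀ y, q y = ∫ x, (∏ m, gaussPdf d σ (y m - x)) * p x)
    (y : Fin M → EuclideanSpace ℝ (Fin d)) (m : Fin M) :
    (q y)⁻¹ • (∫ x, ((∏ k, gaussPdf d σ (y k - x)) * p x) • x) =
      y m + σ ^ 2 • gradient (fun z => Real.log (q (Function.update y m z))) (y m) := by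
  classical
  set A : ℝ := (2 * Real.pi * σ ^ 2) ^ (-(d : ℝ) / 2) with hA
  have hA0 : 0 < A := by positivity
  have hp_int' : Integrable p := by
    by_contra h
    rw [integral_undef h] at hp_int; norm_num at hp_int
  -- the "other measurements" factor
  set c : EuclideanSpace ℝ (Fin d) → ℝ :=
    fun x => (∏ k ∈ univ.erase m, gaussPdf d σ (y k - x)) * p x with hcdef
  have hc_nonneg : ∀ x, 0 ≤ c x := fun x =>
    mul_nonneg (Finset.prod_nonneg fun k _ => (gaussPdf_pos d hσ _).le) (hp_nonneg x)
  set B : ℝ := A ^ (univ.erase m).card with hB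
  have hB0 : 0 < B := pow_pos hA0 _
  have hc_le : ∀ x, c x ≤ B * p x := by
    intro x
    apply mul_le_mul_of_nonneg_right _ (hp_nonneg x)
    rw [hB, ← Finset.prod_const]
    exact Finset.prod_le_prod (fun k _ => (gaussPdf_pos d hσ _).le)
      (fun k _ => gaussPdf_le d hσ _)
  have hgmeas : ∀ z : EuclideanSpace ℝ (Fin d),
      Measurable fun x : EuclideanSpace ℝ (Fin d) => gaussPdf d σ (z - x) :=
    fun z => (gaussPdf_continuous d σ).measurable.comp (measurable_const.sub measurable_id)
  have hc_meas : Measurable c := by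
    apply Measurable.mul _ hp_meas
    exact Finset.measurable_prod _ fun k _ => hgmeas (y k)
  have hc_int : Integrable c :=
    (hp_int'.const_mul B).mono' hc_meas.aestronglyMeasurable
      (Filter.Eventually.of_forall fun x => by
        rw [Real.norm_eq_abs, abs_of_nonneg (hc_nonneg x)]; exact hc_le x)
  have hxc_int : Integrable (fun x => ‖x‖ * c x) := by
    refine (hp_moment.const_mul B).mono'
      (measurable_norm.mul hc_meas).aestronglyMeasurable
      (Filter.Eventually.of_forall fun x => ?_)
    rw [Real.norm_eq_abs, abs_of_nonneg (mul_nonneg (norm_nonneg x) (hc_nonneg x))]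
    calc ‖x‖ * c x ≤ ‖x‖ * (B * p x) :=
          mul_le_mul_of_nonneg_left (hc_le x) (norm_nonneg x)
      _ = B * (‖x‖ * p x) := by ring
  -- the full integrand
  set w : EuclideanSpace ℝ (Fin d) → ℝ :=
    fun x => (∏ k, gaussPdf d σ (y k - x)) * p x with hwdef
  have hw_eq : ∀ (z : EuclideanSpace ℝ (Fin d)) x,
      (∏ k, gaussPdf d σ (Function.update y m z k - x)) * p x
        = gaussPdf d σ (z - x) * c x := by
    intro z x
    rw [hcdef, ← Finset.mul_prod_erase univ _ (mem_univ m), Function.update_self]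
    rw [Finset.prod_congr rfl fun k hk => by
      rw [Function.update_of_ne (Finset.ne_of_mem_erase hk)]]
    ring
  have hw_fac : ∀ x, w x = gaussPdf d σ (y m - x) * c x := by
    intro x
    have := hw_eq (y m) x
    rwa [Function.update_eq_self] at this
  have hw_nonneg : ∀ x, 0 ≤ w x := fun x =>
    mul_nonneg (Finset.prod_nonneg fun k _ => (gaussPdf_pos d hσ _).le) (hp_nonneg x)
  have hw_meas : Measurable w :=
    (Finset.measurable_prod _ fun k _ => hgmeas (y k)).mul hp_meas
  have hw_int : Integrable w := by
    refine (hc_int.const_mul A).mono' hw_meas.aestronglyMeasurable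
      (Filter.Eventually.of_forall fun x => ?_)
    rw [Real.norm_eq_abs, abs_of_nonneg (hw_nonneg x), hw_fac x]
    exact mul_le_mul_of_nonneg_right (gaussPdf_le d hσ _) (hc_nonneg x)
  have hwx_int : Integrable (fun x => w x • x) := by
    refine (hxc_int.const_mul A).mono'
      (hw_meas.aestronglyMeasurable.smul aestronglyMeasurable_id)
      (Filter.Eventually.of_forall fun x => ?_)
    rw [norm_smul, Real.norm_eq_abs, abs_of_nonneg (hw_nonneg x), hw_fac x]
    calc gaussPdf d σ (y m - x) * c x * ‖x‖ ≤ A * c x * ‖x‖ :=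
          mul_le_mul_of_nonneg_right
            (mul_le_mul_of_nonneg_right (gaussPdf_le d hσ _) (hc_nonneg x)) (norm_nonneg x)
      _ = A * (‖x‖ * c x) := by ring
  -- positivity of the denominator
  have hQy : q y = ∫ x, w x := hq y
  have hQ_pos : 0 < ∫ x, w x := by
    rcases (integral_nonneg (f := w) hw_nonneg).lt_or_eq with h | h
    · exact h
    · exfalso
      have h0 : w =ᵐ[volume] 0 :=
        (integral_eq_zero_iff_of_nonneg hw_nonneg hw_int).1 h.symm
      have hp0 : p =ᵐ[volume] 0 := by
        refine h0.mono fun x hx => ?_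
        have hprod : 0 < ∏ k, gaussPdf d σ (y k - x) :=
          Finset.prod_pos fun k _ => gaussPdf_pos d hσ _
        have : (∏ k, gaussPdf d σ (y k - x)) * p x = 0 := hx
        simpa [hprod.ne'] using this
      have : ∫ x, p x = 0 := by
        rw [integral_congr_ae hp0]; simp
      rw [hp_int] at this; norm_num at this
  -- differentiation under the integral sign
  set z₀ := y m with hz₀
  set F : EuclideanSpace ℝ (Fin d) → ℝ := fun z => ∫ x, gaussPdf d σ (z - x) * c x with hF
  have hqF : ∀ z, q (Function.update y m z) = F z := by
    intro z
    rw [hq]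
    simp only [hw_eq]
    rfl
  set vf : EuclideanSpace ℝ (Fin d) → EuclideanSpace ℝ (Fin d) → EuclideanSpace ℝ (Fin d) :=
    fun z x => c x • ((-(σ ^ 2)⁻¹ * gaussPdf d σ (z - x)) • (z - x)) with hvf
  set F' : EuclideanSpace ℝ (Fin d) → EuclideanSpace ℝ (Fin d) →
      (EuclideanSpace ℝ (Fin d) →L[ℝ] ℝ) :=
    fun z x => InnerProductSpace.toDual ℝ _ (vf z x) with hF'
  have h_deriv : ∀ (x z : EuclideanSpace ℝ (Fin d)),
      HasFDerivAt (fun z => gaussPdf d σ (z - x) * c x) (F' z x) z := by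
    intro x z
    have h := ((gauss_hasGradientAt d hσ x z).hasFDerivAt).mul_const (c x)
    refine h.congr_fderiv ?_
    ext v
    simp only [hF', hvf, InnerProductSpace.toDual_apply_apply, real_inner_smul_left,
      ContinuousLinearMap.smul_apply, smul_eq_mul]
  have hvf_norm : ∀ z x, ‖vf z x‖ ≤ c x * (A / σ) := by
    intro z x
    rw [hvf]
    rw [norm_smul, Real.norm_eq_abs, abs_of_nonneg (hc_nonneg x)]
    exact mul_le_mul_of_nonneg_left (gaussGrad_norm_le d hσ x z) (hc_nonneg x)
  have hbound_int : Integrable (fun x => c x * (A / σ)) := hc_int.mul_const _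
  have hvf_meas : ∀ z, Measurable (vf z) := by
    intro z
    exact hc_meas.smul ((measurable_const.mul (hgmeas z)).smul
      (measurable_const.sub measurable_id))
  have hvf_int : Integrable (vf z₀) :=
    hbound_int.mono' (hvf_meas z₀).aestronglyMeasurable
      (Filter.Eventually.of_forall fun x => hvf_norm z₀ x)
  have hF'_bound : ∀ z x, ‖F' z x‖ ≤ c x * (A / σ) := by
    intro z x
    rw [hF']
    rw [LinearIsometryEquiv.norm_map]
    exact hvf_norm z x
  have hF'_meas : AEStronglyMeasurable (F' z₀) volume :=
    Continuous.comp_aestronglyMeasurable (LinearIsometryEquiv.continuous _)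
      (hvf_meas z₀).aestronglyMeasurable
  have hF'_int : Integrable (F' z₀) :=
    hbound_int.mono' hF'_meas
      (Filter.Eventually.of_forall fun x => hF'_bound z₀ x)
  have key : HasFDerivAt F (∫ x, F' z₀ x) z₀ := by
    apply hasFDerivAt_integral_of_dominated_of_fderiv_le (s := Metric.ball z₀ 1) (Metric.ball_mem_nhds z₀ one_pos)
    · exact Filter.Eventually.of_forall fun z =>
        ((hgmeas z).mul hc_meas).aestronglyMeasurable
    · refine (hc_int.const_mul A).mono'
        ((hgmeas z₀).mul hc_meas).aestronglyMeasurable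
        (Filter.Eventually.of_forall fun x => ?_)
      rw [Real.norm_eq_abs, abs_of_nonneg (mul_nonneg (gaussPdf_pos d hσ _).le (hc_nonneg x))]
      exact mul_le_mul_of_nonneg_right (gaussPdf_le d hσ _) (hc_nonneg x)
    · exact hF'_meas
    · exact Filter.Eventually.of_forall fun x z _ => hF'_bound z x
    · exact hbound_int
    · exact Filter.Eventually.of_forall fun x z _ => h_deriv x z
  have hswap : (∫ x, F' z₀ x) = (InnerProductSpace.toDual ℝ _) (∫ x, vf z₀ x) := by
    apply ContinuousLinearMap.ext
    intro v
    rw [ContinuousLinearMap.integral_apply hF'_int]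
    rw [InnerProductSpace.toDual_apply_apply]
    have h1 : (fun x => (F' z₀ x) v) = fun x => (inner ℝ v (vf z₀ x) : ℝ) := by
      funext x
      rw [hF', InnerProductSpace.toDual_apply_apply, real_inner_comm]
    rw [h1, integral_inner hvf_int, real_inner_comm]
  have hGval : (∫ x, vf z₀ x)
      = (-(σ ^ 2)⁻¹) • ((∫ x, w x) • z₀ - ∫ x, w x • x) := by
    have h1 : ∀ x, vf z₀ x = (-(σ ^ 2)⁻¹) • (w x • (z₀ - x)) := by
      intro x
      simp only [hvf, hw_fac x, smul_smul]
      congr 1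
      ring
    simp only [h1]
    rw [integral_smul]
    congr 1
    have h2 : (fun x => w x • (z₀ - x)) = fun x => w x • z₀ - w x • x :=
      funext fun x => smul_sub _ _ _
    rw [h2, integral_sub (hw_int.smul_const z₀) hwx_int, integral_smul_const]
  have hFz : F z₀ = ∫ x, w x := by
    have h := hqF z₀
    rw [hz₀, Function.update_eq_self] at h
    rw [← h, hQy]
  have hne : F z₀ ≠ 0 := by rw [hFz]; exact hQ_pos.ne'
  have hlog := (Real.hasDerivAt_log hne).comp_hasFDerivAt z₀ key
  have hloggrad : HasGradientAt (fun z => Real.log (F z))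
      ((F z₀)⁻¹ • ∫ x, vf z₀ x) z₀ := by
    rw [hasGradientAt_iff_hasFDerivAt]
    refine hlog.congr_fderiv ?_
    rw [hswap]
    ext v
    simp only [InnerProductSpace.toDual_apply_apply, real_inner_smul_left,
      ContinuousLinearMap.smul_apply, smul_eq_mul]
  have hfun2 : (fun z => Real.log (q (Function.update y m z))) = fun z => Real.log (F z) :=
    funext fun z => by rw [hqF z]
  rw [hfun2, hloggrad.gradient, hGval, hFz, hQy]
  set Q := ∫ x, w x with hQdef
  set I := ∫ x, w x • x with hIdef
  have hQne : Q ≠ 0 := hQ_pos.ne'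
  have hσ2 : (σ ^ 2 : ℝ) ≠ 0 := by positivity
  match_scalars <;> field_simp <;> ring
end

section
/- Let $p_X = \mathcal{N}(0, \Sigma)$ with $\Sigma = \mathrm{diag}(\tau_1^2,\dots,\tau_d^2)$ and let $\mathbf{F}$ be the $Md \times Md$ precision matrix of the M-density $q(\mathbf{y}) = \int \prod_{m=1}^M \mathcal{N}(y_m; x, \sigma^2 I_d) p(x) dx$. Then the eigenvalues of $\mathbf{F}$ are: $\sigma^{-2}$ with multiplicity $(M-1)d$, and $\sigma^{-2}/(1 + M\sigma^{-2}\tau_i^2)$ for each $i = 1,\dots,d$. -/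
set_option synthInstance.maxHeartbeats 1000000
set_option maxHeartbeats 1600000

open Polynomial Matrix

open Polynomial

lemma det_aux {K : Type*} [Field K] {M : ℕ} (hM : 1 ≤ M) (x y : K) (hx : x ≠ 0) :
    Matrix.det (x • (1 : Matrix (Fin M) (Fin M) K) + y • Matrix.of (fun _ _ => 1)) =
      x ^ (M - 1) * (x + M * y) := by
  have h1 : x • (1 : Matrix (Fin M) (Fin M) K) + y • Matrix.of (fun _ _ => 1)
      = x • ((1 : Matrix (Fin M) (Fin M) K) +
          replicateCol Unit (fun _ : Fin M => y / x) * replicateRow Unit (fun _ : Fin M => (1:K))) := by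
    ext i j
    simp only [Matrix.add_apply, Matrix.smul_apply, Matrix.mul_apply, smul_eq_mul,
      Matrix.of_apply, Finset.univ_unique, Finset.sum_singleton, replicateCol_apply, replicateRow_apply,
      Matrix.one_apply]
    split <;> field_simp
  rw [h1, Matrix.det_smul, Matrix.det_one_add_replicateCol_mul_replicateRow]
  simp only [dotProduct, Fintype.card_fin, one_mul]
  rw [Finset.sum_const, Finset.card_univ, Fintype.card_fin, nsmul_eq_mul]
  have hM' : x ^ M = x ^ (M - 1) * x := by
    conv_lhs => rw [← Nat.succ_pred_eq_of_pos hM]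
    rw [pow_succ, Nat.pred_eq_sub_one, mul_comm]
  rw [hM']
  field_simp

lemma charpoly_aux {M : ℕ} (hM : 1 ≤ M) (a b : ℝ) :
    (Matrix.of fun m m' : Fin M => if m = m' then a else b).charpoly
      = (X - C (a - b)) ^ (M - 1) * (X - C (a + ((M : ℝ) - 1) * b)) := by
  set B : Matrix (Fin M) (Fin M) ℝ := Matrix.of fun m m' => if m = m' then a else b with hB
  apply RatFunc.algebraMap_injective (K := ℝ)
  set φ := algebraMap ℝ[X] (RatFunc ℝ) with hφ
  have hinj : Function.Injective φ := RatFunc.algebraMap_injective (K := ℝ)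
  have hx : φ (X - C (a - b)) ≠ 0 :=
    (map_ne_zero_iff φ hinj).mpr (Polynomial.X_sub_C_ne_zero _)
  have hmap : (charmatrix B).map φ
      = φ (X - C (a - b)) • (1 : Matrix (Fin M) (Fin M) (RatFunc ℝ))
        + φ (-C b) • Matrix.of (fun _ _ => 1) := by
    ext i j
    by_cases h : i = j
    · subst h
      have : B i i = a := by simp [hB]
      simp [Matrix.map_apply, charmatrix_apply_eq, this, Matrix.one_apply, map_sub, map_neg]
      ring
    · have : B i j = b := by simp [hB, h]
      simp [Matrix.map_apply, charmatrix_apply_ne _ _ _ h, this, Matrix.one_apply, h]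
  have key : φ (Matrix.charpoly B) = φ (X - C (a - b)) ^ (M - 1)
      * (φ (X - C (a - b)) + (M : RatFunc ℝ) * φ (-C b)) := by
    rw [Matrix.charpoly, RingHom.map_det, RingHom.mapMatrix_apply, hmap, det_aux hM _ _ hx]
  rw [key, ← map_natCast φ M, ← _root_.map_mul φ, ← _root_.map_add, ← map_pow, ← _root_.map_mul φ]
  congr 2
  rw [← Polynomial.C_eq_natCast, mul_neg, ← C_mul, ← sub_eq_add_neg, sub_sub, ← C_add]
  congr 2
  ring

/-- The `Md × Md` precision matrix `F` of the Gaussian M-density of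
`N(0, diag(τ₁²,…,τ_d²))`, which is block diagonal over coordinates with blocks having
diagonal entries `a i = σ⁻²(1 - ω i² σ⁻²)` and off-diagonal entries `b i = -ω i² σ⁻⁴`,
`ω i² = (Mσ⁻² + τ i⁻²)⁻¹`, has eigenvalues `σ⁻²` with multiplicity `(M-1)d` and
`σ⁻²/(1 + Mσ⁻²τ i²)` for each `i` (stated via the characteristic polynomial). -/
theorem mdensity_precision_eigenvalues
    (d M : ℕ) (hM : 1 ≤ M) (σ : ℝ) (hσ : 0 < σ)
    (τ : Fin d → ℝ) (hτ : ∀ i, 0 < τ i)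
    (ω2 a b : Fin d → ℝ)
    (hω2 : ∀ i, ω2 i = ((M : ℝ) * (σ ^ 2)⁻¹ + (τ i ^ 2)⁻¹)⁻¹)
    (ha : ∀ i, a i = (σ ^ 2)⁻¹ * (1 - ω2 i * (σ ^ 2)⁻¹))
    (hb : ∀ i, b i = -(ω2 i * ((σ ^ 2)⁻¹) ^ 2))
    (F : Matrix (Fin M × Fin d) (Fin M × Fin d) ℝ)
    (hF : ∀ m i m' i', F (m, i) (m', i') =
      if i = i' then (if m = m' then a i else b i) else 0) :
    F.charpoly = (X - C ((σ ^ 2)⁻¹)) ^ ((M - 1) * d)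
      * ∏ i : Fin d, (X - C ((σ ^ 2)⁻¹ / (1 + (M : ℝ) * (σ ^ 2)⁻¹ * τ i ^ 2))) := by
  set B : Fin d → Matrix (Fin M) (Fin M) ℝ :=
    fun i => Matrix.of fun m m' => if m = m' then a i else b i with hBdef
  have hFB : F = Matrix.blockDiagonal B := by
    ext ⟨m, i⟩ ⟨m', i'⟩
    rw [hF, Matrix.blockDiagonal_apply]
    simp [hBdef]
  have hcm : charmatrix F = Matrix.blockDiagonal (fun i => charmatrix (B i)) := by
    ext ⟨m, i⟩ ⟨m', i'⟩
    rw [Matrix.blockDiagonal_apply]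
    by_cases hii : i = i'
    · subst hii
      by_cases hmm : m = m'
      · subst hmm
        rw [if_pos rfl, charmatrix_apply_eq, charmatrix_apply_eq, hFB,
          Matrix.blockDiagonal_apply, if_pos rfl]
      · have hne : ((m, i) : Fin M × Fin d) ≠ (m', i) := by simp [hmm]
        rw [if_pos rfl, charmatrix_apply_ne _ _ _ hne, charmatrix_apply_ne _ _ _ hmm, hFB,
          Matrix.blockDiagonal_apply, if_pos rfl]
    · have hne : ((m, i) : Fin M × Fin d) ≠ (m', i') := by simp [hii]
      rw [if_neg hii, charmatrix_apply_ne _ _ _ hne, hFB, Matrix.blockDiagonal_apply,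
        if_neg hii, map_zero, neg_zero]
  have hfactor : ∀ i, (B i).charpoly
      = (X - C ((σ ^ 2)⁻¹)) ^ (M - 1)
        * (X - C ((σ ^ 2)⁻¹ / (1 + (M : ℝ) * (σ ^ 2)⁻¹ * τ i ^ 2))) := by
    intro i
    have hσ2 : (σ ^ 2) ≠ 0 := pow_ne_zero 2 hσ.ne'
    have hτ2 : (τ i ^ 2) ≠ 0 := pow_ne_zero 2 (hτ i).ne'
    have hden : (M : ℝ) * (σ ^ 2)⁻¹ + (τ i ^ 2)⁻¹ ≠ 0 := by
      have : (0:ℝ) < (M : ℝ) * (σ ^ 2)⁻¹ + (τ i ^ 2)⁻¹ := by positivity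
      linarith
    have hden2 : 1 + (M : ℝ) * (σ ^ 2)⁻¹ * τ i ^ 2 ≠ 0 := by
      have : (0:ℝ) < 1 + (M : ℝ) * (σ ^ 2)⁻¹ * τ i ^ 2 := by positivity
      linarith
    have h1 : a i - b i = (σ ^ 2)⁻¹ := by rw [ha, hb]; ring
    have h2 : a i + ((M : ℝ) - 1) * b i
        = (σ ^ 2)⁻¹ / (1 + (M : ℝ) * (σ ^ 2)⁻¹ * τ i ^ 2) := by
      rw [ha, hb, hω2]
      field_simp
      have ht : σ ^ 2 / τ i ^ 2 * τ i ^ 2 = σ ^ 2 := div_mul_cancel₀ _ hτ2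
      linear_combination (↑M : ℝ) * ht
    rw [hBdef]
    rw [charpoly_aux hM (a i) (b i), h1, h2]
  calc F.charpoly = (Matrix.blockDiagonal (fun i => charmatrix (B i))).det := by
        rw [Matrix.charpoly, hcm]
    _ = ∏ i : Fin d, (B i).charpoly := by
        rw [Matrix.det_blockDiagonal]; rfl
    _ = ∏ i : Fin d, ((X - C ((σ ^ 2)⁻¹)) ^ (M - 1)
          * (X - C ((σ ^ 2)⁻¹ / (1 + (M : ℝ) * (σ ^ 2)⁻¹ * τ i ^ 2)))) := by
        exact Finset.prod_congr rfl fun i _ => hfactor i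
    _ = _ := by
        rw [Finset.prod_mul_distrib, Finset.prod_const, Finset.card_univ, Fintype.card_fin,
          ← pow_mul]
end
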